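/- In the formal power series ring ℂ[[s, z, w, z', w']] in five variables over ℂ, the ideal generated by s·(z − z') and s·(w − w') equals the intersection of the prime ideals (s) and (z − z', w − w'); in particular it is a radical ideal. -/

import Mathlib

open MvPowerSeries Finsupp Finset

noncomputable section Z3aux

abbrev R5 := MvPowerSeries (Fin 5) ℂ

instance : IsDomain R5 := NoZeroDivisors.to_isDomain _

def U (i j : Fin 5) (d : Fin 5 →₀ ℕ) (a b : ℕ) : Fin 5 →₀ ℕ :=
  (d.update i a).update j b

variable {i j : Fin 5}

theorem U_apply (d : Fin 5 →₀ ℕ) (a b : ℕ) (k : Fin 5) :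
    U i j d a b k = if k = j then b else if k = i then a else d k := by
  simp only [U, Finsupp.coe_update, Function.update_apply]

theorem U_apply_i (hij : i ≠ j) (d : Fin 5 →₀ ℕ) (a b : ℕ) : U i j d a b i = a := by
  rw [U_apply, if_neg hij, if_pos rfl]

theorem U_apply_j (d : Fin 5 →₀ ℕ) (a b : ℕ) : U i j d a b j = b := by
  rw [U_apply, if_pos rfl]

theorem U_apply_ne {k : Fin 5} (hk : k ≠ i) (hk' : k ≠ j)
    (d : Fin 5 →₀ ℕ) (a b : ℕ) : U i j d a b k = d k := by
  rw [U_apply, if_neg hk', if_neg hk]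

theorem U_self (d : Fin 5 →₀ ℕ) : U i j d (d i) (d j) = d := by
  ext k
  rw [U_apply]
  split_ifs with h1 h2
  · rw [h1]
  · rw [h2]
  · rfl

theorem U_self' (d : Fin 5 →₀ ℕ) (hq : d j = 0) : U i j d (d i) 0 = d := by
  rw [← hq, U_self]

theorem U_tsub {l : Fin 5} (hl : l = i ∨ l = j) (d : Fin 5 →₀ ℕ) (a b : ℕ) :
    U i j (d - Finsupp.single l 1) a b = U i j d a b := by
  ext k
  rw [U_apply, U_apply]
  split_ifs with h1 h2 <;> try rfl
  have hkl : k ≠ l := by rcases hl with rfl | rfl <;> [exact h2; exact h1]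
  rw [Finsupp.tsub_apply, Finsupp.single_apply, if_neg (fun h => hkl h.symm), Nat.sub_zero]

/-! ### the merge map ρ -/

def rhoFun (i j : Fin 5) (f : R5) : R5 :=
  fun e => if e j = 0 then ∑ b ∈ Finset.range (e i + 1), f (U i j e (e i - b) b) else 0

theorem coeff_rhoFun (f : R5) (e : Fin 5 →₀ ℕ) :
    coeff e (rhoFun i j f) =
      if e j = 0 then ∑ b ∈ Finset.range (e i + 1), coeff (U i j e (e i - b) b) f else 0 := rfl

/-- merge the `i`- and `j`- coordinates into the `i`-coordinate -/
def M (i j : Fin 5) (u : Fin 5 →₀ ℕ) : Fin 5 →₀ ℕ := U i j u (u i + u j) 0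

theorem rhoFun_mul (hij : i ≠ j) (f g : R5) :
    rhoFun i j (f * g) = rhoFun i j f * rhoFun i j g := by
  apply MvPowerSeries.ext; intro e
  rw [coeff_rhoFun, coeff_mul]
  by_cases h : e j = 0
  · rw [if_pos h]
    have hR : ∀ p ∈ antidiagonal e,
        coeff p.1 (rhoFun i j f) * coeff p.2 (rhoFun i j g) =
        ∑ q ∈ (Finset.range (p.1 i + 1)) ×ˢ (Finset.range (p.2 i + 1)),
          coeff (U i j p.1 (p.1 i - q.1) q.1) f * coeff (U i j p.2 (p.2 i - q.2) q.2) g := by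
      intro p hp
      simp only [Finset.HasAntidiagonal.mem_antidiagonal] at hp
      have hj1 : p.1 j + p.2 j = e j := by rw [← Finsupp.add_apply, hp]
      rw [coeff_rhoFun, coeff_rhoFun, if_pos (by omega), if_pos (by omega),
        Finset.sum_mul_sum, ← Finset.sum_product']
    rw [Finset.sum_congr rfl hR]
    simp only [coeff_mul]
    rw [Finset.sum_sigma', Finset.sum_sigma']
    refine Eq.symm (Finset.sum_nbij'
      (i := fun y : (Σ _p : (Fin 5 →₀ ℕ) × (Fin 5 →₀ ℕ), ℕ × ℕ) =>
        (⟨y.2.1 + y.2.2, (U i j y.1.1 (y.1.1 i - y.2.1) y.2.1,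
            U i j y.1.2 (y.1.2 i - y.2.2) y.2.2)⟩ : Σ _b : ℕ, (Fin 5 →₀ ℕ) × (Fin 5 →₀ ℕ)))
      (j := fun x : (Σ _b : ℕ, (Fin 5 →₀ ℕ) × (Fin 5 →₀ ℕ)) =>
        (⟨(M i j x.2.1, M i j x.2.2), (x.2.1 j, x.2.2 j)⟩ :
          Σ _p : (Fin 5 →₀ ℕ) × (Fin 5 →₀ ℕ), ℕ × ℕ))
      ?_ ?_ ?_ ?_ ?_)
    · -- hi : maps into the A-side sigma set
      rintro ⟨⟨p₁, p₂⟩, c, d⟩ hy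
      simp only [Finset.mem_sigma, Finset.HasAntidiagonal.mem_antidiagonal, Finset.mem_product,
        Finset.mem_range] at hy ⊢
      have hp := hy.1
      have hc := hy.2.1
      have hd := hy.2.2
      have hpj : p₁ j + p₂ j = e j := by rw [← Finsupp.add_apply, hp]
      have hpi : p₁ i + p₂ i = e i := by rw [← Finsupp.add_apply, hp]
      refine ⟨by omega, ?_⟩
      ext k
      rw [Finsupp.add_apply, U_apply, U_apply, U_apply]
      split_ifs with h1 h2
      · rfl
      · omega
      · rw [← Finsupp.add_apply, hp]
    · -- hj : inverse maps into the B-side sigma set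
      rintro ⟨b, u, v⟩ hx
      simp only [Finset.mem_sigma, Finset.HasAntidiagonal.mem_antidiagonal, Finset.mem_product,
        Finset.mem_range] at hx ⊢
      obtain ⟨hb, huv⟩ := hx
      have hji : u j + v j = b := by
        have h1 : (u + v) j = U i j e (e i - b) b j := by rw [huv]
        rwa [Finsupp.add_apply, U_apply_j] at h1
      have hii : u i + v i = e i - b := by
        have h1 : (u + v) i = U i j e (e i - b) b i := by rw [huv]
        rwa [Finsupp.add_apply, U_apply_i hij] at h1
      have hMui : M i j u i = u i + u j := U_apply_i hij _ _ _
      have hMvi : M i j v i = v i + v j := U_apply_i hij _ _ _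
      refine ⟨?_, by omega, by omega⟩
      ext k
      rw [Finsupp.add_apply, M, M, U_apply, U_apply]
      split_ifs with h1 h2
      · rw [h1, h]
      · rw [h2]; omega
      · have h3 : u k + v k = e k := by
          have h4 : (u + v) k = U i j e (e i - b) b k := by rw [huv]
          rwa [Finsupp.add_apply, U_apply_ne h2 h1] at h4
        exact h3
    · -- left_inv
      rintro ⟨⟨p₁, p₂⟩, c, d⟩ hy
      simp only [Finset.mem_sigma, Finset.HasAntidiagonal.mem_antidiagonal, Finset.mem_product,
        Finset.mem_range] at hy
      have hp := hy.1
      have hc := hy.2.1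
      have hd := hy.2.2
      have hpj : p₁ j + p₂ j = e j := by rw [← Finsupp.add_apply, hp]
      have hp1j : p₁ j = 0 := by omega
      have hp2j : p₂ j = 0 := by omega
      have e1 : M i j (U i j p₁ (p₁ i - c) c) = p₁ := by
        ext k
        rw [M, U_apply_i hij, U_apply_j, U_apply]
        split_ifs with h1 h2
        · rw [h1]; omega
        · rw [h2]; omega
        · exact U_apply_ne h2 h1 p₁ _ _
      have e2 : M i j (U i j p₂ (p₂ i - d) d) = p₂ := by
        ext k
        rw [M, U_apply_i hij, U_apply_j, U_apply]
        split_ifs with h1 h2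
        · rw [h1]; omega
        · rw [h2]; omega
        · exact U_apply_ne h2 h1 p₂ _ _
      simp only [Sigma.mk.inj_iff, Prod.mk.injEq, heq_iff_eq]
      exact ⟨⟨e1, e2⟩, U_apply_j _ _ _, U_apply_j _ _ _⟩
    · -- right_inv
      rintro ⟨b, u, v⟩ hx
      simp only [Finset.mem_sigma, Finset.HasAntidiagonal.mem_antidiagonal, Finset.mem_range] at hx
      obtain ⟨hb, huv⟩ := hx
      have hji : u j + v j = b := by
        have h1 : (u + v) j = U i j e (e i - b) b j := by rw [huv]
        rwa [Finsupp.add_apply, U_apply_j] at h1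
      have e1 : U i j (M i j u) (M i j u i - u j) (u j) = u := by
        ext k
        rw [M, U_apply_i hij, U_apply]
        split_ifs with h1 h2
        · rw [h1]
        · rw [h2]; omega
        · exact U_apply_ne h2 h1 u _ _
      have e2 : U i j (M i j v) (M i j v i - v j) (v j) = v := by
        ext k
        rw [M, U_apply_i hij, U_apply]
        split_ifs with h1 h2
        · rw [h1]
        · rw [h2]; omega
        · exact U_apply_ne h2 h1 v _ _
      simp only [Sigma.mk.inj_iff, Prod.mk.injEq, heq_iff_eq]
      exact ⟨hji, e1, e2⟩
    · -- terms agree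
      rintro ⟨⟨p₁, p₂⟩, c, d⟩ _
      rfl
  · rw [if_neg h]
    refine (Finset.sum_eq_zero fun p hp => ?_).symm
    simp only [Finset.HasAntidiagonal.mem_antidiagonal] at hp
    have hj1 : p.1 j + p.2 j = e j := by rw [← Finsupp.add_apply, hp]
    rcases Nat.eq_zero_or_pos (p.1 j) with h1 | h1
    · rw [coeff_rhoFun g, if_neg (by omega : ¬ p.2 j = 0), mul_zero]
    · rw [coeff_rhoFun f, if_neg (by omega : ¬ p.1 j = 0), zero_mul]



section oops

variable (hij : i ≠ j)

theorem rhoFun_one : rhoFun i j (1 : R5) = 1 := by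
  apply MvPowerSeries.ext; intro e
  rw [coeff_rhoFun]
  by_cases h : e j = 0
  · rw [if_pos h]
    by_cases he : e = 0
    · subst he
      rw [coeff_one, if_pos rfl]
      simp only [Finsupp.coe_zero, Pi.zero_apply, zero_add, Finset.sum_range_one, Nat.sub_zero]
      rw [show U i j 0 0 0 = (0 : Fin 5 →₀ ℕ) from U_self' 0 rfl, coeff_one, if_pos rfl]
    · rw [coeff_one, if_neg he]
      refine Finset.sum_eq_zero fun b _ => ?_
      rw [coeff_one, if_neg]
      intro h0
      apply he
      have hb : b = 0 := by
        have := congrArg (fun t : Fin 5 →₀ ℕ => t j) h0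
        simpa [U_apply_j] using this
      subst hb
      rw [Nat.sub_zero, U_self' e h] at h0
      exact h0
  · rw [if_neg h, coeff_one, if_neg]
    intro he
    rw [he] at h
    simp at h

theorem rhoFun_zero : rhoFun i j (0 : R5) = 0 := by
  apply MvPowerSeries.ext; intro e
  rw [coeff_rhoFun, coeff_zero]
  split_ifs with h
  · exact Finset.sum_eq_zero fun b _ => rfl
  · rfl

theorem rhoFun_add (f g : R5) : rhoFun i j (f + g) = rhoFun i j f + rhoFun i j g := by
  apply MvPowerSeries.ext; intro e
  rw [map_add, coeff_rhoFun, coeff_rhoFun, coeff_rhoFun]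
  split_ifs with h
  · rw [← Finset.sum_add_distrib]
    exact Finset.sum_congr rfl fun b _ => by rw [map_add]
  · rw [add_zero]

def rhoHom (i j : Fin 5) (hij : i ≠ j) : R5 →+* R5 where
  toFun := rhoFun i j
  map_one' := rhoFun_one
  map_mul' := rhoFun_mul hij
  map_zero' := rhoFun_zero
  map_add' := rhoFun_add

theorem rhoHom_apply (f : R5) : rhoHom i j hij f = rhoFun i j f := rfl

/-- `ρ` fixes every variable except `X j`, which it maps to `X i`. -/
theorem rhoFun_X_ne {k : Fin 5} (hk : k ≠ j) : rhoFun i j (X k : R5) = X k := by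
  apply MvPowerSeries.ext; intro e
  rw [coeff_rhoFun, coeff_X]
  by_cases h : e j = 0
  · rw [if_pos h]
    rw [Finset.sum_eq_single_of_mem 0 (Finset.mem_range.mpr (by omega)) ?side]
    · rw [Nat.sub_zero, U_self' e h, coeff_X]
    case side =>
      intro b _ hb
      rw [coeff_X, if_neg]
      intro h0
      apply hb
      have h5 : b = (Finsupp.single k 1) j := by
        have := congrArg (fun t : Fin 5 →₀ ℕ => t j) h0
        simpa [U_apply_j] using this
      rw [Finsupp.single_apply, if_neg (fun h' : k = j => hk h')] at h5
      exact h5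
  · rw [if_neg h, if_neg]
    intro he
    apply h
    rw [he, Finsupp.single_apply, if_neg (fun h' : k = j => hk h')]

theorem rhoFun_X_j (hij : i ≠ j) : rhoFun i j (X j : R5) = (X i : R5) := by
  apply MvPowerSeries.ext; intro e
  rw [coeff_rhoFun, coeff_X]
  by_cases h : e j = 0
  · rw [if_pos h]
    by_cases he : e = Finsupp.single i 1
    · rw [if_pos he]
      have hei : e i = 1 := by rw [he, Finsupp.single_apply, if_pos rfl]
      rw [hei]
      rw [Finset.sum_range_succ, Finset.sum_range_one]
      have t0 : U i j e (1 - 0) 0 = e := by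
        rw [show (1 : ℕ) - 0 = e i by omega, U_self' e h]
      have t1 : U i j e (1 - 1) 1 = Finsupp.single j 1 := by
        ext k
        rw [U_apply, Finsupp.single_apply]
        by_cases h1 : k = j
        · subst h1; rw [if_pos rfl, if_pos rfl]
        · rw [if_neg h1, if_neg (fun h' : j = k => h1 h'.symm)]
          by_cases h2 : k = i
          · rw [if_pos h2]; rfl
          · rw [if_neg h2, he, Finsupp.single_apply, if_neg (fun h' : i = k => h2 h'.symm)]
      rw [t0, t1, coeff_X, coeff_X, if_pos rfl, if_neg]
      · rw [zero_add]
      · rw [he]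
        intro he2
        have := DFunLike.congr_fun he2 j
        simp only [Finsupp.single_apply, if_pos rfl] at this
        rw [if_neg (fun h' : i = j => hij h')] at this
        exact one_ne_zero this.symm
    · rw [if_neg he]
      refine Finset.sum_eq_zero fun b hb => ?_
      rw [coeff_X, if_neg]
      intro h0
      apply he
      have hbj : b = 1 := by
        have := DFunLike.congr_fun h0 j
        simpa [U_apply_j, Finsupp.single_apply] using this
      subst hbj
      have hb1 : 1 ≤ e i := by
        simp only [Finset.mem_range] at hb
        omega
      have hei : e i - 1 = 0 := by
        have := DFunLike.congr_fun h0 i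
        rw [U_apply_i hij] at this
        simp only [Finsupp.single_apply, if_neg (fun h' : j = i => hij h'.symm)] at this
        exact this
      ext k
      rw [Finsupp.single_apply]
      by_cases h1 : k = i
      · rw [h1, if_pos rfl]; omega
      · rw [if_neg (fun h' : i = k => h1 h'.symm)]
        by_cases h2 : k = j
        · rw [h2, h]
        · have := DFunLike.congr_fun h0 k
          rw [U_apply_ne h1 h2] at this
          simp only [Finsupp.single_apply, if_neg (fun h' : j = k => h2 h'.symm)] at this
          exact this
  · rw [if_neg h, if_neg]
    intro he
    apply h
    rw [he, Finsupp.single_apply, if_neg (fun h' : i = j => hij h')]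


theorem U_eq_self {d : Fin 5 →₀ ℕ} {a b : ℕ} (ha : a = d i) (hb : b = d j) :
    U i j d a b = d := by rw [ha, hb, U_self]

theorem coeff_X_mul' (s : Fin 5) (phi : R5) (d : Fin 5 →₀ ℕ) :
    coeff d ((X s : R5) * phi) =
      if 1 ≤ d s then coeff (d - Finsupp.single s 1) phi else 0 := by
  rw [X, coeff_monomial_mul]
  split_ifs with h1 h2 h3
  · rw [one_mul]
  · exact absurd (Finsupp.single_le_iff.mp h1) h2
  · exact absurd (Finsupp.single_le_iff.mpr h3) h1
  · rfl

/-- The explicit witness for division. -/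
def divFun (i j : Fin 5) (f : R5) : R5 :=
  fun d => ∑ t ∈ Finset.range (d i + 1), f (U i j d (d i - t) (d j + 1 + t))

theorem coeff_divFun (f : R5) (d : Fin 5 →₀ ℕ) :
    coeff d (divFun i j f) =
      ∑ t ∈ Finset.range (d i + 1), coeff (U i j d (d i - t) (d j + 1 + t)) f := rfl

theorem sub_rho (hij : i ≠ j) (f : R5) :
    f - rhoFun i j f = (X i - X j) * (-(divFun i j f)) := by
  have hring : (X i - X j) * (-(divFun i j f)) =
      (X j : R5) * divFun i j f - (X i : R5) * divFun i j f := by ring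
  apply MvPowerSeries.ext; intro d
  rw [hring, map_sub, map_sub, coeff_rhoFun, coeff_X_mul', coeff_X_mul']
  have hsi : ((d - Finsupp.single i 1) : Fin 5 →₀ ℕ) i = d i - 1 := by
    rw [Finsupp.tsub_apply, Finsupp.single_apply, if_pos rfl]
  have hsi' : ((d - Finsupp.single i 1) : Fin 5 →₀ ℕ) j = d j := by
    rw [Finsupp.tsub_apply, Finsupp.single_apply, if_neg hij, Nat.sub_zero]
  have hsj : ((d - Finsupp.single j 1) : Fin 5 →₀ ℕ) i = d i := by
    rw [Finsupp.tsub_apply, Finsupp.single_apply, if_neg (fun h => hij h.symm), Nat.sub_zero]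
  have hsj' : ((d - Finsupp.single j 1) : Fin 5 →₀ ℕ) j = d j - 1 := by
    rw [Finsupp.tsub_apply, Finsupp.single_apply, if_pos rfl]
  have cGi : coeff (d - Finsupp.single i 1) (divFun i j f) =
      ∑ t ∈ Finset.range (d i - 1 + 1), coeff (U i j d (d i - 1 - t) (d j + 1 + t)) f := by
    rw [coeff_divFun, hsi, hsi']
    exact Finset.sum_congr rfl fun t _ => by rw [U_tsub (Or.inl rfl)]
  have cGj : coeff (d - Finsupp.single j 1) (divFun i j f) =
      ∑ t ∈ Finset.range (d i + 1), coeff (U i j d (d i - t) (d j - 1 + 1 + t)) f := by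
    rw [coeff_divFun, hsj, hsj']
    exact Finset.sum_congr rfl fun t _ => by rw [U_tsub (Or.inr rfl)]
  by_cases hq : d j = 0
  · rw [if_pos hq, if_neg (by omega : ¬ 1 ≤ d j)]
    by_cases hp : d i = 0
    · rw [if_neg (by omega : ¬ 1 ≤ d i), hp]
      rw [Finset.sum_range_one,
        show U i j d (0 - 0) 0 = d from U_eq_self (by omega) (by omega)]
      ring
    · rw [if_pos (by omega : 1 ≤ d i), cGi, Finset.sum_range_succ',
        show U i j d (d i - 0) 0 = d from U_eq_self (by omega) (by omega),
        show d i - 1 + 1 = d i from by omega]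
      have hterm : ∀ t ∈ Finset.range (d i),
          coeff (U i j d (d i - 1 - t) (d j + 1 + t)) f =
          coeff (U i j d (d i - (t + 1)) (t + 1)) f := fun t _ => by
        rw [show d i - 1 - t = d i - (t + 1) from by omega,
          show d j + 1 + t = t + 1 from by omega]
      rw [Finset.sum_congr rfl hterm]
      ring
  · rw [if_neg hq, if_pos (by omega : 1 ≤ d j), cGj]
    by_cases hp : d i = 0
    · rw [if_neg (by omega : ¬ 1 ≤ d i), hp, Finset.sum_range_one,
        show U i j d (0 - 0) (d j - 1 + 1 + 0) = d from U_eq_self (by omega) (by omega)]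
    · rw [if_pos (by omega : 1 ≤ d i), cGi, Finset.sum_range_succ',
        show U i j d (d i - 0) (d j - 1 + 1 + 0) = d from U_eq_self (by omega) (by omega),
        show d i - 1 + 1 = d i from by omega]
      have hterm : ∀ t ∈ Finset.range (d i),
          coeff (U i j d (d i - 1 - t) (d j + 1 + t)) f =
          coeff (U i j d (d i - (t + 1)) (d j - 1 + 1 + (t + 1))) f := fun t _ => by
        rw [show d i - 1 - t = d i - (t + 1) from by omega,
          show d j + 1 + t = d j - 1 + 1 + (t + 1) from by omega]
      rw [Finset.sum_congr rfl hterm]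
      ring

/-! ### the composite homomorphism `T` and its kernel -/

def T : R5 →+* R5 := (rhoHom 2 4 (by decide)).comp (rhoHom 1 3 (by decide))

theorem T_apply (f : R5) : T f = rhoFun 2 4 (rhoFun 1 3 f) := rfl

theorem ker_T : RingHom.ker T = Ideal.span {(X 1 - X 3 : R5), X 2 - X 4} := by
  have h13 : (1 : Fin 5) ≠ 3 := by decide
  have h24 : (2 : Fin 5) ≠ 4 := by decide
  apply le_antisymm
  · intro f hf
    rw [RingHom.mem_ker, T_apply] at hf
    have h1 := sub_rho h13 f
    have h2 := sub_rho h24 (rhoFun 1 3 f)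
    rw [Ideal.mem_span_pair]
    exact ⟨-(divFun 1 3 f), -(divFun 2 4 (rhoFun 1 3 f)), by linear_combination -h1 - h2 - hf⟩
  · rw [Ideal.span_le]
    intro x hx
    simp only [Set.mem_insert_iff, Set.mem_singleton_iff] at hx
    rcases hx with rfl | rfl
    · rw [SetLike.mem_coe, RingHom.mem_ker, map_sub]
      have e1 : T (X 1) = X 1 := by
        rw [T_apply, rhoFun_X_ne (by decide : (1:Fin 5) ≠ 3),
          rhoFun_X_ne (by decide : (1:Fin 5) ≠ 4)]
      have e3 : T (X 3) = X 1 := by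
        rw [T_apply, rhoFun_X_j h13, rhoFun_X_ne (by decide : (1:Fin 5) ≠ 4)]
      rw [e1, e3, sub_self]
    · rw [SetLike.mem_coe, RingHom.mem_ker, map_sub]
      have e2 : T (X 2) = X 2 := by
        rw [T_apply, rhoFun_X_ne (by decide : (2:Fin 5) ≠ 3),
          rhoFun_X_ne (by decide : (2:Fin 5) ≠ 4)]
      have e4 : T (X 4) = X 2 := by
        rw [T_apply, rhoFun_X_ne (by decide : (4:Fin 5) ≠ 3), rhoFun_X_j h24]
      rw [e2, e4, sub_self]

theorem P2_isPrime : (Ideal.span {(X 1 - X 3 : R5), X 2 - X 4}).IsPrime := by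
  rw [← ker_T]
  exact RingHom.ker_isPrime T

theorem X0_not_mem : (X 0 : R5) ∉ Ideal.span {(X 1 - X 3 : R5), X 2 - X 4} := by
  rw [← ker_T, RingHom.mem_ker, T_apply,
    rhoFun_X_ne (by decide : (0:Fin 5) ≠ 3), rhoFun_X_ne (by decide : (0:Fin 5) ≠ 4)]
  intro h0
  have := congrArg (coeff (Finsupp.single 0 1)) h0
  rw [coeff_X, if_pos rfl, coeff_zero] at this
  exact one_ne_zero this

end oops

/-! ### The slice map `π` (setting `s = 0`) -/

def piFun (f : R5) : R5 := fun d => if d 0 = 0 then f d else 0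

theorem coeff_piFun (f : R5) (d : Fin 5 →₀ ℕ) :
    coeff d (piFun f) = if d 0 = 0 then coeff d f else 0 := rfl

theorem piFun_mul (f g : R5) : piFun (f * g) = piFun f * piFun g := by
  apply MvPowerSeries.ext; intro d
  rw [coeff_piFun, coeff_mul]
  by_cases h : d 0 = 0
  · rw [if_pos h, coeff_mul]
    refine Finset.sum_congr rfl fun p hp => ?_
    simp only [Finset.HasAntidiagonal.mem_antidiagonal] at hp
    have hadd : p.1 0 + p.2 0 = d 0 := by rw [← Finsupp.add_apply, hp]
    rw [coeff_piFun, coeff_piFun, if_pos (by omega), if_pos (by omega)]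
  · rw [if_neg h]
    refine (Finset.sum_eq_zero fun p hp => ?_).symm
    simp only [Finset.HasAntidiagonal.mem_antidiagonal] at hp
    have hadd : p.1 0 + p.2 0 = d 0 := by rw [← Finsupp.add_apply, hp]
    rcases Nat.eq_zero_or_pos (p.1 0) with h1 | h1
    · rw [coeff_piFun g, if_neg (by omega : ¬ p.2 0 = 0), mul_zero]
    · rw [coeff_piFun f, if_neg (by omega : ¬ p.1 0 = 0), zero_mul]

theorem piFun_one : piFun (1 : R5) = 1 := by
  apply MvPowerSeries.ext; intro d
  rw [coeff_piFun, coeff_one]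
  by_cases h1 : d 0 = 0
  · rw [if_pos h1]
  · rw [if_neg h1, if_neg (fun hd => h1 (by rw [hd]; rfl))]

def piHom : R5 →+* R5 where
  toFun := piFun
  map_one' := piFun_one
  map_mul' := piFun_mul
  map_zero' := by
    apply MvPowerSeries.ext; intro d
    rw [coeff_piFun]
    simp
  map_add' f g := by
    apply MvPowerSeries.ext; intro d
    rw [coeff_piFun, map_add, map_add, coeff_piFun, coeff_piFun]
    split_ifs with h
    · rfl
    · rw [add_zero]

theorem piHom_apply (f : R5) : piHom f = piFun f := rfl

theorem ker_piHom : RingHom.ker piHom = Ideal.span {(X 0 : R5)} := by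
  apply le_antisymm
  · intro f hf
    rw [RingHom.mem_ker] at hf
    have hf' : ∀ d : Fin 5 →₀ ℕ, d 0 = 0 → coeff d f = 0 := by
      intro d hd
      have : coeff d (piHom f) = coeff d 0 := by rw [hf]
      rwa [coeff_zero, piHom_apply, coeff_piFun, if_pos hd] at this
    rw [Ideal.mem_span_singleton]
    refine ⟨@id R5 (fun d => coeff (d + Finsupp.single 0 1) f), ?_⟩
    apply MvPowerSeries.ext; intro d
    rw [X, coeff_monomial_mul]
    split_ifs with h
    · rw [one_mul]
      show coeff d f = coeff (d - Finsupp.single 0 1 + Finsupp.single 0 1) f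
      rw [tsub_add_cancel_of_le h]
    · refine hf' d ?_
      rw [Finsupp.single_le_iff] at h
      omega
  · rw [Ideal.span_le, Set.singleton_subset_iff]
    show piHom (X 0) = 0
    apply MvPowerSeries.ext; intro d
    rw [piHom_apply, coeff_piFun, coeff_zero]
    split_ifs with h
    · rw [coeff_X, if_neg]
      intro hd
      rw [hd] at h
      simp at h
    · rfl

theorem P1_isPrime : (Ideal.span {(X 0 : R5)}).IsPrime := by
  rw [← ker_piHom]
  exact RingHom.ker_isPrime piHom


end Z3aux



open MvPowerSeries

/-- In `ℂ[[s, z, w, z', w']]` (variables `s = X 0`, `z = X 1`, `w = X 2`, `z' = X 3`,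
`w' = X 4`), the ideal `(s(z - z'), s(w - w'))` equals the intersection of the prime
ideals `(s)` and `(z - z', w - w')`; in particular it is a radical ideal. -/
theorem span_eq_inf_primes_Z3 :
    ((Ideal.span {X 0} : Ideal (MvPowerSeries (Fin 5) ℂ)).IsPrime ∧
      (Ideal.span {X 1 - X 3, X 2 - X 4} : Ideal (MvPowerSeries (Fin 5) ℂ)).IsPrime) ∧
    (Ideal.span {X 0 * (X 1 - X 3), X 0 * (X 2 - X 4)} :
        Ideal (MvPowerSeries (Fin 5) ℂ))
      = Ideal.span {X 0} ⊓ Ideal.span {X 1 - X 3, X 2 - X 4} ∧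
    (Ideal.span {X 0 * (X 1 - X 3), X 0 * (X 2 - X 4)} :
        Ideal (MvPowerSeries (Fin 5) ℂ)).IsRadical := by
  have hP1 := P1_isPrime
  have hP2 := P2_isPrime
  have heq : (Ideal.span {X 0 * (X 1 - X 3), X 0 * (X 2 - X 4)} :
      Ideal (MvPowerSeries (Fin 5) ℂ))
      = Ideal.span {X 0} ⊓ Ideal.span {X 1 - X 3, X 2 - X 4} := by
    apply le_antisymm
    · rw [Ideal.span_le]
      intro x hx
      simp only [Set.mem_insert_iff, Set.mem_singleton_iff] at hx
      rcases hx with rfl | rfl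
      · rw [SetLike.mem_coe, Submodule.mem_inf]
        exact ⟨Ideal.mem_span_singleton.mpr ⟨X 1 - X 3, rfl⟩,
          Ideal.mem_span_pair.mpr ⟨X 0, 0, by ring⟩⟩
      · rw [SetLike.mem_coe, Submodule.mem_inf]
        exact ⟨Ideal.mem_span_singleton.mpr ⟨X 2 - X 4, rfl⟩,
          Ideal.mem_span_pair.mpr ⟨0, X 0, by ring⟩⟩
    · intro x hx
      rw [Submodule.mem_inf] at hx
      obtain ⟨hx1, hx2⟩ := hx
      obtain ⟨g, rfl⟩ := Ideal.mem_span_singleton.mp hx1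
      have hg : g ∈ Ideal.span {(X 1 - X 3 : MvPowerSeries (Fin 5) ℂ), X 2 - X 4} := by
        rcases hP2.mem_or_mem hx2 with h | h
        · exact absurd h X0_not_mem
        · exact h
      obtain ⟨a, b, hab⟩ := Ideal.mem_span_pair.mp hg
      rw [Ideal.mem_span_pair]
      exact ⟨a, b, by rw [← hab]; ring⟩
  refine ⟨⟨hP1, hP2⟩, heq, ?_⟩
  rw [heq]
  exact le_inf ((Ideal.radical_mono inf_le_left).trans hP1.isRadical)
    ((Ideal.radical_mono inf_le_right).trans hP2.isRadical)
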